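/- Let (τ_j) be a partition of [a,b] with subinterval lengths h_j, and let ĥ := max{2h₀, h₁, ..., h_{N−1}, 2h_N}. Let P₀ be the L²(a,b)-orthogonal projection onto the space of functions vanishing identically on the first and last subintervals and constant on each interior subinterval. Then for every u ∈ H¹(a,b) with u(a) = u(b) = 0, ‖u − P₀u‖_{L²(a,b)} ≤ (ĥ/π)‖u'‖_{L²(a,b)}. -/

import Mathlib

open MeasureTheory intervalIntegral Set Real


lemma cs_interval (c e : ℝ) (hce : c ≤ e) (f : ℝ → ℝ)
    (hf : IntervalIntegrable f volume c e)
    (hf2 : IntervalIntegrable (fun x => f x ^ 2) volume c e) :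
    (∫ x in c..e, f x) ^ 2 ≤ (e - c) * ∫ x in c..e, f x ^ 2 := by
  rcases eq_or_lt_of_le hce with rfl | hlt
  · simp
  set A : ℝ := (∫ x in c..e, f x) / (e - c) with hA
  have hec : (0:ℝ) < e - c := by linarith
  have h0 : (0:ℝ) ≤ ∫ x in c..e, (f x - A) ^ 2 :=
    intervalIntegral.integral_nonneg hce (fun x _ => sq_nonneg _)
  have hexp : ∫ x in c..e, (f x - A) ^ 2
      = (∫ x in c..e, f x ^ 2) - 2 * A * (∫ x in c..e, f x) + A ^ 2 * (e - c) := by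
    have : ∀ x, (f x - A) ^ 2 = f x ^ 2 - 2 * A * f x + A ^ 2 := by intro x; ring
    simp_rw [this]
    rw [intervalIntegral.integral_add (hf2.sub ((hf.const_mul (2*A)))) intervalIntegrable_const,
      intervalIntegral.integral_sub hf2 (hf.const_mul (2*A)),
      intervalIntegral.integral_const_mul, intervalIntegral.integral_const]
    simp only [smul_eq_mul]
    field_simp
  have hA2 : A * (e - c) = ∫ x in c..e, f x := by
    rw [hA, div_mul_cancel₀ _ hec.ne']
  nlinarith [h0, hexp, sq_nonneg A]

set_option maxHeartbeats 2000000 in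
lemma poincare_left (c d : ℝ) (hcd : c < d) (u u' : ℝ → ℝ)
    (hderiv : ∀ x ∈ Set.Icc c d, HasDerivAt u (u' x) x)
    (hu' : IntervalIntegrable u' volume c d)
    (hu'2 : IntervalIntegrable (fun x => u' x ^ 2) volume c d)
    (huc : u c = 0) :
    ∫ x in c..d, u x ^ 2 ≤ (2 * (d - c) / Real.pi) ^ 2 * ∫ x in c..d, u' x ^ 2 := by
  have hL : (0:ℝ) < d - c := by linarith
  set k : ℝ := Real.pi / (2 * (d - c)) with hk
  have hkpos : 0 < k := div_pos Real.pi_pos (by linarith)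
  have hkL : k * (d - c) = Real.pi / 2 := by rw [hk, div_mul_eq_mul_div, mul_div_mul_right _ _ hL.ne']
  set S : ℝ → ℝ := fun x => Real.sin (k * (x - c)) with hS
  set φ : ℝ → ℝ := fun x => k * Real.cos (k * (x - c)) / S x with hφ
  have hucont : ContinuousOn u (Icc c d) := fun x hx =>
    (hderiv x hx).continuousAt.continuousWithinAt
  -- the key claim, for every ε ∈ (0, d - c)
  have key : ∀ ε, 0 < ε → ε < d - c →
      k ^ 2 * ∫ x in (c+ε)..d, u x ^ 2 ≤ ∫ x in c..d, u' x ^ 2 := by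
    intro ε hε0 hεL
    set e : ℝ := c + ε with he
    have hce : c < e := by simp [he]; linarith
    have hed : e < d := by simp [he]; linarith
    have hsubI : Icc e d ⊆ Icc c d := Icc_subset_Icc (le_of_lt hce) le_rfl
    have hsubU : Set.uIcc e d ⊆ Set.uIcc c d := by
      rw [uIcc_of_le hed.le, uIcc_of_le hcd.le]; exact hsubI
    have hSpos : ∀ x ∈ Icc e d, 0 < S x := by
      intro x hx
      apply Real.sin_pos_of_pos_of_lt_pi
      · have : 0 < x - c := by have := hx.1; simp [he] at this ⊢; linarith
        positivity
      · have hxd : x - c ≤ d - c := by have := hx.2; linarith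
        have : k * (x - c) ≤ Real.pi / 2 := by
          rw [← hkL]; exact mul_le_mul_of_nonneg_left hxd hkpos.le
        linarith [Real.pi_pos]
    -- derivative of φ
    have hφderiv : ∀ x ∈ Icc e d, HasDerivAt φ (-k^2 / (S x)^2) x := by
      intro x hx
      have hlin : HasDerivAt (fun y : ℝ => k * (y - c)) k x := by
        simpa using ((hasDerivAt_id x).sub_const c).const_mul k
      have hSd : HasDerivAt S (Real.cos (k * (x - c)) * k) x :=
        (Real.hasDerivAt_sin _).comp x hlin
      have hCd : HasDerivAt (fun y => k * Real.cos (k * (y - c)))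
          (k * (-Real.sin (k * (x - c)) * k)) x :=
        (((Real.hasDerivAt_cos _).comp x hlin)).const_mul k
      have hne := (hSpos x hx).ne'
      have := hCd.div hSd hne
      refine this.congr_deriv ?_
      symm
      rw [div_eq_div_iff (by positivity) (by positivity)]
      have hpyth := Real.sin_sq_add_cos_sq (k * (x - c))
      simp only [hS]
      linear_combination (k ^ 2 * Real.sin (k * (x - c)) ^ 2) * hpyth
    have hφcont : ContinuousOn φ (Icc e d) := fun x hx =>
      ((hφderiv x hx).continuousAt).continuousWithinAt
    have hucontJ : ContinuousOn u (Icc e d) := hucont.mono hsubI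
    have hu'J : IntervalIntegrable u' volume e d := hu'.mono_set hsubU
    have hu'2J : IntervalIntegrable (fun x => u' x ^ 2) volume e d := hu'2.mono_set hsubU
    -- F' : derivative of φ * u^2
    set F' : ℝ → ℝ := fun x => (-k^2 / (S x)^2) * u x ^ 2 + (φ x * (2 * u x)) * u' x with hF'
    have hF'int : IntervalIntegrable F' volume e d := by
      apply IntervalIntegrable.add
      · apply ContinuousOn.intervalIntegrable
        rw [uIcc_of_le hed.le]
        exact (((continuousOn_const).div
            ((Real.continuous_sin.comp (by continuity)).continuousOn.pow 2)
            (fun x hx => pow_ne_zero 2 (hSpos x hx).ne')).mul (hucontJ.pow 2))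
      · apply IntervalIntegrable.continuousOn_mul hu'J
        rw [uIcc_of_le hed.le]
        exact hφcont.mul (continuousOn_const.mul hucontJ)
    have hFderiv : ∀ x ∈ Set.uIcc e d, HasDerivAt (fun y => φ y * u y ^ 2) (F' x) x := by
      intro x hx
      rw [uIcc_of_le hed.le] at hx
      have h1 := hφderiv x hx
      have h2 : HasDerivAt (fun y => u y ^ 2) (2 * u x * u' x) x := by
        have := (hderiv x (hsubI hx)).fun_pow 2
        simpa using this
      have := h1.mul h2
      refine this.congr_deriv ?_
      symm
      simp only [hF']
      ring
    have hIBP : ∫ x in e..d, F' x = φ d * u d ^ 2 - φ e * u e ^ 2 :=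
      intervalIntegral.integral_eq_sub_of_hasDerivAt hFderiv hF'int
    have hφd : φ d = 0 := by
      simp only [hφ, hkL, Real.cos_pi_div_two, mul_zero, zero_div]
    -- pointwise identity on [e,d]
    have hptwise : ∀ x ∈ Set.uIcc e d,
        (fun x => (u' x - φ x * u x) ^ 2) x
          = (fun x => u' x ^ 2 - F' x - k ^ 2 * u x ^ 2) x := by
      intro x hx
      rw [uIcc_of_le hed.le] at hx
      have hne := (hSpos x hx).ne'
      simp only [hF', hφ]
      have hpyth := Real.sin_sq_add_cos_sq (k * (x - c))
      simp only [hS] at hne ⊢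
      field_simp
      linear_combination (k ^ 2 * u x ^ 2) * hpyth
    have hnonneg : (0:ℝ) ≤ ∫ x in e..d, (u' x - φ x * u x) ^ 2 :=
      intervalIntegral.integral_nonneg hed.le (fun x _ => sq_nonneg _)
    have hu2Jint : IntervalIntegrable (fun x => k ^ 2 * u x ^ 2) volume e d := by
      apply ContinuousOn.intervalIntegrable
      rw [uIcc_of_le hed.le]
      exact continuousOn_const.mul (hucontJ.pow 2)
    have hsplit : ∫ x in e..d, (u' x - φ x * u x) ^ 2
        = (∫ x in e..d, u' x ^ 2) - (∫ x in e..d, F' x) - ∫ x in e..d, k ^ 2 * u x ^ 2 := by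
      rw [intervalIntegral.integral_congr hptwise,
        intervalIntegral.integral_sub (hu'2J.sub hF'int) hu2Jint,
        intervalIntegral.integral_sub hu'2J hF'int]
    -- boundary term estimate
    have hFTC : u e = ∫ x in c..e, u' x := by
      have hsubU2 : Set.uIcc c e ⊆ Set.uIcc c d := by
        rw [uIcc_of_le hce.le, uIcc_of_le hcd.le]
        exact Icc_subset_Icc le_rfl hed.le
      have := intervalIntegral.integral_eq_sub_of_hasDerivAt
        (f := u) (f' := u') (a := c) (b := e) ?_ (hu'.mono_set hsubU2)
      · rw [this, huc, sub_zero]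
      · intro x hx
        rw [uIcc_of_le hce.le] at hx
        exact hderiv x ⟨hx.1, hx.2.trans hed.le⟩
    have hu'I : IntervalIntegrable u' volume c e := by
      apply hu'.mono_set
      rw [uIcc_of_le hce.le, uIcc_of_le hcd.le]
      exact Icc_subset_Icc le_rfl hed.le
    have hu'2I : IntervalIntegrable (fun x => u' x ^ 2) volume c e := by
      apply hu'2.mono_set
      rw [uIcc_of_le hce.le, uIcc_of_le hcd.le]
      exact Icc_subset_Icc le_rfl hed.le
    have hI0 : (0:ℝ) ≤ ∫ x in c..e, u' x ^ 2 :=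
      intervalIntegral.integral_nonneg hce.le (fun x _ => sq_nonneg _)
    have hCS : u e ^ 2 ≤ ε * ∫ x in c..e, u' x ^ 2 := by
      have := cs_interval c e hce.le u' hu'I hu'2I
      rw [hFTC]
      have : e - c = ε := by simp [he]
      calc (∫ x in c..e, u' x) ^ 2 ≤ (e - c) * ∫ x in c..e, u' x ^ 2 :=
            cs_interval c e hce.le u' hu'I hu'2I
        _ = ε * ∫ x in c..e, u' x ^ 2 := by rw [this]
    have hφe_nonneg : 0 ≤ φ e := by
      have he_mem : e ∈ Icc e d := ⟨le_rfl, hed.le⟩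
      have h1 : 0 < k * (e - c) := by
        have : e - c = ε := by simp [he]
        rw [this]; positivity
      have h2 : k * (e - c) ≤ Real.pi / 2 := by
        rw [← hkL]
        apply mul_le_mul_of_nonneg_left _ hkpos.le
        linarith [hed]
      have hcos : 0 ≤ Real.cos (k * (e - c)) :=
        Real.cos_nonneg_of_mem_Icc ⟨by nlinarith [Real.pi_pos, h1], h2⟩
      exact div_nonneg (mul_nonneg hkpos.le hcos) (hSpos e he_mem).le
    have hφe_le : φ e ≤ 1 / ε := by
      have hεc : e - c = ε := by simp [he]
      have h1 : 0 < k * ε := by positivity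
      have h2 : k * ε < Real.pi / 2 := by
        rw [← hkL]
        exact mul_lt_mul_of_pos_left hεL hkpos
      have htan := Real.lt_tan h1 h2
      have hcos : 0 < Real.cos (k * ε) := Real.cos_pos_of_mem_Ioo ⟨by linarith [Real.pi_pos], h2⟩
      have hsin : 0 < Real.sin (k * ε) := Real.sin_pos_of_pos_of_lt_pi h1 (by linarith [Real.pi_pos])
      rw [Real.tan_eq_sin_div_cos, lt_div_iff₀ hcos] at htan
      -- k * ε * cos < sin  ⟹  k * cos / sin ≤ 1/ε
      simp only [hφ, hS, hεc]
      rw [div_le_div_iff₀ hsin hε0]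
      ring_nf at htan ⊢
      linarith [htan]
    have hbd : φ e * u e ^ 2 ≤ ∫ x in c..e, u' x ^ 2 := by
      calc φ e * u e ^ 2 ≤ φ e * (ε * ∫ x in c..e, u' x ^ 2) :=
            mul_le_mul_of_nonneg_left hCS hφe_nonneg
        _ ≤ (1/ε) * (ε * ∫ x in c..e, u' x ^ 2) := by
            apply mul_le_mul_of_nonneg_right hφe_le
            positivity
        _ = ∫ x in c..e, u' x ^ 2 := by field_simp
    have hadj : (∫ x in c..e, u' x ^ 2) + ∫ x in e..d, u' x ^ 2 = ∫ x in c..d, u' x ^ 2 :=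
      intervalIntegral.integral_add_adjacent_intervals hu'2I hu'2J
    have hconst : ∫ x in e..d, k ^ 2 * u x ^ 2 = k ^ 2 * ∫ x in e..d, u x ^ 2 :=
      intervalIntegral.integral_const_mul _ _
    rw [hsplit, hIBP, hφd, hconst] at hnonneg
    simp only [he] at hbd hadj ⊢
    linarith [hnonneg, hbd, hadj]
  -- take ε → 0
  obtain ⟨M, hM⟩ := isCompact_Icc.exists_bound_of_continuousOn hucont
  have hM0 : 0 ≤ M := le_trans (norm_nonneg _) (hM c ⟨le_rfl, hcd.le⟩)
  have hu2int : IntervalIntegrable (fun x => u x ^ 2) volume c d := by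
    apply ContinuousOn.intervalIntegrable
    rw [uIcc_of_le hcd.le]
    exact hucont.pow 2
  have hfin : k ^ 2 * ∫ x in c..d, u x ^ 2 ≤ ∫ x in c..d, u' x ^ 2 := by
    by_contra hcon
    push_neg at hcon
    set δ : ℝ := k ^ 2 * (∫ x in c..d, u x ^ 2) - ∫ x in c..d, u' x ^ 2 with hδ
    have hδ0 : 0 < δ := by simp only [hδ]; linarith
    have hδval : k ^ 2 * (∫ x in c..d, u x ^ 2) - (∫ x in c..d, u' x ^ 2) = δ := rfl
    clear_value δ
    have hden : 0 < k ^ 2 * M ^ 2 + 1 := by positivity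
    set ε : ℝ := min (δ / (2 * (k ^ 2 * M ^ 2 + 1))) ((d - c) / 2) with hε
    have hε0 : 0 < ε := lt_min (by positivity) (by linarith)
    have hεL : ε < d - c := lt_of_le_of_lt (min_le_right _ _) (by linarith)
    have hεbound0 : ε ≤ δ / (2 * (k ^ 2 * M ^ 2 + 1)) := min_le_left _ _
    clear_value ε
    have hkey := key ε hε0 hεL
    -- split the u² integral
    have hsub2 : Set.uIcc c (c + ε) ⊆ Set.uIcc c d := by
      rw [uIcc_of_le (by linarith : c ≤ c + ε), uIcc_of_le hcd.le]
      exact Icc_subset_Icc le_rfl (by linarith)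
    have hu2I : IntervalIntegrable (fun x => u x ^ 2) volume c (c + ε) :=
      hu2int.mono_set hsub2
    have hu2J : IntervalIntegrable (fun x => u x ^ 2) volume (c + ε) d := by
      apply hu2int.mono_set
      rw [uIcc_of_le (by linarith : c + ε ≤ d), uIcc_of_le hcd.le]
      exact Icc_subset_Icc (by linarith) le_rfl
    have hadj2 : (∫ x in c..(c+ε), u x ^ 2) + ∫ x in (c+ε)..d, u x ^ 2
        = ∫ x in c..d, u x ^ 2 :=
      intervalIntegral.integral_add_adjacent_intervals hu2I hu2J
    have hsmall : ∫ x in c..(c+ε), u x ^ 2 ≤ ε * M ^ 2 := by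
      have hmono : ∫ x in c..(c+ε), u x ^ 2 ≤ ∫ x in c..(c+ε), M ^ 2 := by
        apply intervalIntegral.integral_mono_on (by linarith) hu2I intervalIntegrable_const
        intro x hx
        have hxm : x ∈ Icc c d := ⟨hx.1, by linarith [hx.2]⟩
        have := hM x hxm
        have : |u x| ≤ M := by rwa [Real.norm_eq_abs] at this
        nlinarith [abs_nonneg (u x), sq_abs (u x)]
      rw [intervalIntegral.integral_const] at hmono
      simp only [smul_eq_mul] at hmono
      calc ∫ x in c..(c+ε), u x ^ 2 ≤ (c + ε - c) * M ^ 2 := hmono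
        _ = ε * M ^ 2 := by ring
    have hεbound : ε ≤ δ / (2 * (k ^ 2 * M ^ 2 + 1)) := hεbound0
    have : k ^ 2 * (∫ x in c..d, u x ^ 2)
        ≤ k ^ 2 * (ε * M ^ 2) + ∫ x in c..d, u' x ^ 2 := by
      rw [← hadj2]
      have := mul_le_mul_of_nonneg_left hsmall (by positivity : (0:ℝ) ≤ k ^ 2)
      nlinarith [hkey]
    have hcontr : δ ≤ k ^ 2 * M ^ 2 * ε := by
      have hr : k ^ 2 * (ε * M ^ 2) = k ^ 2 * M ^ 2 * ε := by ring
      linarith [hδval, this]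
    have : k ^ 2 * M ^ 2 * ε ≤ (k ^ 2 * M ^ 2 + 1) * (δ / (2 * (k ^ 2 * M ^ 2 + 1))) := by
      apply mul_le_mul (by linarith) hεbound hε0.le (by positivity)
    have hhalf : (k ^ 2 * M ^ 2 + 1) * (δ / (2 * (k ^ 2 * M ^ 2 + 1))) = δ / 2 := by
      field_simp
    linarith
  have hkinv : (2 * (d - c) / Real.pi) ^ 2 = 1 / k ^ 2 := by
    rw [hk]
    have hπ := Real.pi_ne_zero
    field_simp
  calc ∫ x in c..d, u x ^ 2
      = (1 / k ^ 2) * (k ^ 2 * ∫ x in c..d, u x ^ 2) := by field_simp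
    _ ≤ (1 / k ^ 2) * ∫ x in c..d, u' x ^ 2 :=
        mul_le_mul_of_nonneg_left hfin (by positivity)
    _ = (2 * (d - c) / Real.pi) ^ 2 * ∫ x in c..d, u' x ^ 2 := by rw [hkinv]

lemma poincare_right (c d : ℝ) (hcd : c < d) (u u' : ℝ → ℝ)
    (hderiv : ∀ x ∈ Set.Icc c d, HasDerivAt u (u' x) x)
    (hu' : IntervalIntegrable u' volume c d)
    (hu'2 : IntervalIntegrable (fun x => u' x ^ 2) volume c d)
    (hud : u d = 0) :
    ∫ x in c..d, u x ^ 2 ≤ (2 * (d - c) / Real.pi) ^ 2 * ∫ x in c..d, u' x ^ 2 := by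
  set v : ℝ → ℝ := fun x => u (c + d - x) with hv
  set v' : ℝ → ℝ := fun x => -u' (c + d - x) with hv'
  have hvderiv : ∀ x ∈ Set.Icc c d, HasDerivAt v (v' x) x := by
    intro x hx
    have hmem : c + d - x ∈ Icc c d := ⟨by linarith [hx.2], by linarith [hx.1]⟩
    have h1 : HasDerivAt (fun y : ℝ => c + d - y) (-1) x := by
      simpa using (hasDerivAt_id x).const_sub (c + d)
    have h2 := (hderiv _ hmem).comp x h1
    simp only [hv, hv']
    refine h2.congr_deriv ?_
    ring
  have hvi' : IntervalIntegrable v' volume c d := by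
    have h := (hu'.comp_sub_left (c + d)).symm
    have h2 : c + d - c = d := by ring
    have h3 : c + d - d = c := by ring
    rw [h2, h3] at h
    exact h.neg
  have hvi'2 : IntervalIntegrable (fun x => v' x ^ 2) volume c d := by
    have h := (hu'2.comp_sub_left (c + d)).symm
    have h2 : c + d - c = d := by ring
    have h3 : c + d - d = c := by ring
    rw [h2, h3] at h
    have heq : (fun x => v' x ^ 2) = fun x => u' (c + d - x) ^ 2 := by
      funext x; simp [hv', neg_sq]
    rw [heq]
    exact h
  have hvc : v c = 0 := by
    simp only [hv]
    have : c + d - c = d := by ring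
    rw [this, hud]
  have hP := poincare_left c d hcd v v' hvderiv hvi' hvi'2 hvc
  have hIv : ∫ x in c..d, v x ^ 2 = ∫ x in c..d, u x ^ 2 := by
    have := intervalIntegral.integral_comp_sub_left (a := c) (b := d)
      (fun y => u y ^ 2) (c + d)
    have h2 : c + d - c = d := by ring
    have h3 : c + d - d = c := by ring
    rw [h2, h3] at this
    simpa [hv] using this
  have hIv' : ∫ x in c..d, v' x ^ 2 = ∫ x in c..d, u' x ^ 2 := by
    have := intervalIntegral.integral_comp_sub_left (a := c) (b := d)
      (fun y => u' y ^ 2) (c + d)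
    have h2 : c + d - c = d := by ring
    have h3 : c + d - d = c := by ring
    rw [h2, h3] at this
    have heq : ∀ x, v' x ^ 2 = u' (c + d - x) ^ 2 := by
      intro x; simp [hv', neg_sq]
    simp_rw [heq]
    exact this
  rw [hIv, hIv'] at hP
  exact hP

lemma poincare_mean (c d : ℝ) (hcd : c < d) (u u' : ℝ → ℝ)
    (hderiv : ∀ x ∈ Set.Icc c d, HasDerivAt u (u' x) x)
    (hu' : IntervalIntegrable u' volume c d)
    (hu'2 : IntervalIntegrable (fun x => u' x ^ 2) volume c d) :
    ∫ x in c..d, (u x - (d - c)⁻¹ * ∫ y in c..d, u y) ^ 2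
      ≤ ((d - c) / Real.pi) ^ 2 * ∫ x in c..d, u' x ^ 2 := by
  have hL : (0 : ℝ) < d - c := by linarith
  set m : ℝ := (c + d) / 2 with hm
  have hcm : c < m := by simp only [hm]; linarith
  have hmd : m < d := by simp only [hm]; linarith
  set K : ℝ := u m with hK
  set ubar : ℝ := (d - c)⁻¹ * ∫ y in c..d, u y with hubar
  have hucont : ContinuousOn u (Icc c d) := fun x hx =>
    (hderiv x hx).continuousAt.continuousWithinAt
  have hint1 : IntervalIntegrable (fun x => (u x - ubar) ^ 2) volume c d := by
    apply ContinuousOn.intervalIntegrable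
    rw [uIcc_of_le hcd.le]
    exact ((hucont.sub continuousOn_const).pow 2)
  have hint2 : IntervalIntegrable (fun x => (u x - K) ^ 2) volume c d := by
    apply ContinuousOn.intervalIntegrable
    rw [uIcc_of_le hcd.le]
    exact ((hucont.sub continuousOn_const).pow 2)
  have huint : IntervalIntegrable u volume c d := by
    apply ContinuousOn.intervalIntegrable
    rw [uIcc_of_le hcd.le]
    exact hucont
  have hubarval : ubar * (d - c) = ∫ y in c..d, u y := by
    rw [hubar]; field_simp
  -- step 1 : mean minimizes
  have hstep1 : ∫ x in c..d, (u x - ubar) ^ 2 ≤ ∫ x in c..d, (u x - K) ^ 2 := by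
    have hdiff : ∫ x in c..d, ((u x - K) ^ 2 - (u x - ubar) ^ 2)
        = (d - c) * (ubar - K) ^ 2 := by
      have hpt : ∀ x, (u x - K) ^ 2 - (u x - ubar) ^ 2
          = (2 * (ubar - K)) * u x + (K ^ 2 - ubar ^ 2) := by intro x; ring
      simp_rw [hpt]
      rw [intervalIntegral.integral_add (huint.const_mul _) intervalIntegrable_const,
        intervalIntegral.integral_const_mul, intervalIntegral.integral_const]
      simp only [smul_eq_mul]
      rw [← hubarval]
      ring
    have := intervalIntegral.integral_sub hint2 hint1
    rw [this] at hdiff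
    nlinarith [sq_nonneg (ubar - K)]
  -- step 2: split at midpoint and apply endpoint lemmas
  have hsub1 : Set.uIcc c m ⊆ Set.uIcc c d := by
    rw [uIcc_of_le hcm.le, uIcc_of_le hcd.le]; exact Icc_subset_Icc le_rfl hmd.le
  have hsub2 : Set.uIcc m d ⊆ Set.uIcc c d := by
    rw [uIcc_of_le hmd.le, uIcc_of_le hcd.le]; exact Icc_subset_Icc hcm.le le_rfl
  have hI1 : Icc c m ⊆ Icc c d := Icc_subset_Icc le_rfl hmd.le
  have hI2 : Icc m d ⊆ Icc c d := Icc_subset_Icc hcm.le le_rfl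
  have hvderiv : ∀ x ∈ Set.Icc c d, HasDerivAt (fun y => u y - K) (u' x) x :=
    fun x hx => (hderiv x hx).sub_const K
  have hleft : ∫ x in c..m, (u x - K) ^ 2
      ≤ (2 * (m - c) / Real.pi) ^ 2 * ∫ x in c..m, u' x ^ 2 := by
    apply poincare_right c m hcm (fun y => u y - K) u'
      (fun x hx => hvderiv x (hI1 hx)) (hu'.mono_set hsub1) (hu'2.mono_set hsub1)
    simp [hK]
  have hright : ∫ x in m..d, (u x - K) ^ 2
      ≤ (2 * (d - m) / Real.pi) ^ 2 * ∫ x in m..d, u' x ^ 2 := by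
    apply poincare_left m d hmd (fun y => u y - K) u'
      (fun x hx => hvderiv x (hI2 hx)) (hu'.mono_set hsub2) (hu'2.mono_set hsub2)
    simp [hK]
  have hcm2 : 2 * (m - c) = d - c := by simp only [hm]; ring
  have hmd2 : 2 * (d - m) = d - c := by simp only [hm]; ring
  have hadjK : (∫ x in c..m, (u x - K) ^ 2) + ∫ x in m..d, (u x - K) ^ 2
      = ∫ x in c..d, (u x - K) ^ 2 :=
    intervalIntegral.integral_add_adjacent_intervals
      (hint2.mono_set hsub1) (hint2.mono_set hsub2)
  have hadj' : (∫ x in c..m, u' x ^ 2) + ∫ x in m..d, u' x ^ 2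
      = ∫ x in c..d, u' x ^ 2 :=
    intervalIntegral.integral_add_adjacent_intervals
      (hu'2.mono_set hsub1) (hu'2.mono_set hsub2)
  rw [hcm2] at hleft
  rw [hmd2] at hright
  calc ∫ x in c..d, (u x - ubar) ^ 2
      ≤ ∫ x in c..d, (u x - K) ^ 2 := hstep1
    _ = (∫ x in c..m, (u x - K) ^ 2) + ∫ x in m..d, (u x - K) ^ 2 := hadjK.symm
    _ ≤ ((d - c) / Real.pi) ^ 2 * (∫ x in c..m, u' x ^ 2)
        + ((d - c) / Real.pi) ^ 2 * ∫ x in m..d, u' x ^ 2 := add_le_add hleft hright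
    _ = ((d - c) / Real.pi) ^ 2 * ∫ x in c..d, u' x ^ 2 := by rw [← hadj']; ring

/-- Error estimate for the `L²`-projection `P₀` onto piecewise constants that vanish on the
first and last subintervals: `P₀u` is `0` on the first and last subintervals and the local
mean of `u` on each interior subinterval, so the squared `L²` error of `P₀` is the left-hand
side below.  Here `hhat` dominates `2h₀, h₁, …, h_{N-1}, 2h_N`. -/
theorem stmt18 (a b : ℝ) (N : ℕ) (hN : 1 ≤ N) (τ : ℕ → ℝ)
    (hτ : ∀ j ≤ N, τ j < τ (j + 1)) (ha : τ 0 = a) (hb : τ (N + 1) = b)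
    (hhat : ℝ)
    (hhhat0 : 2 * (τ 1 - τ 0) ≤ hhat) (hhhatN : 2 * (τ (N + 1) - τ N) ≤ hhat)
    (hhhatint : ∀ j, 1 ≤ j → j < N → τ (j + 1) - τ j ≤ hhat)
    (u u' : ℝ → ℝ)
    (hderiv : ∀ x ∈ Set.Icc a b, HasDerivAt u (u' x) x)
    (hu' : IntervalIntegrable u' volume a b)
    (hu'2 : IntervalIntegrable (fun x => (u' x) ^ 2) volume a b)
    (hua : u a = 0) (hub : u b = 0) :
    ((∫ x in (τ 0)..(τ 1), (u x) ^ 2) +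
        (∑ j ∈ Finset.Ico 1 N,
          ∫ x in τ j..τ (j + 1),
            (u x - (τ (j + 1) - τ j)⁻¹ * ∫ y in τ j..τ (j + 1), u y) ^ 2) +
        ∫ x in (τ N)..(τ (N + 1)), (u x) ^ 2) ≤
      (hhat / Real.pi) ^ 2 * ∫ x in a..b, (u' x) ^ 2 := by
  have hπ := Real.pi_pos
  have hmono : ∀ i j, i ≤ j → j ≤ N + 1 → τ i ≤ τ j := by
    intro i j hij hjN
    induction j, hij using Nat.le_induction with
    | base => exact le_rfl
    | succ n hn ih =>
      have h1 := ih (by omega)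
      have h2 := (hτ n (by omega)).le
      linarith
  have hab : a ≤ b := by
    rw [← ha, ← hb]; exact hmono 0 (N + 1) (by omega) le_rfl
  have hhat0 : 0 < hhat := by
    have := hτ 0 (by omega)
    linarith
  -- subinterval data
  have hsubU : ∀ j, j ≤ N → Set.uIcc (τ j) (τ (j + 1)) ⊆ Set.uIcc a b := by
    intro j hj
    rw [uIcc_of_le (hτ j hj).le, uIcc_of_le hab, ← ha, ← hb]
    exact Icc_subset_Icc (hmono 0 j (by omega) (by omega)) (hmono (j+1) (N+1) (by omega) le_rfl)
  have hsubI : ∀ j, j ≤ N → Set.Icc (τ j) (τ (j + 1)) ⊆ Set.Icc a b := by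
    intro j hj
    rw [← ha, ← hb]
    exact Icc_subset_Icc (hmono 0 j (by omega) (by omega)) (hmono (j+1) (N+1) (by omega) le_rfl)
  have hderivJ : ∀ j, j ≤ N → ∀ x ∈ Set.Icc (τ j) (τ (j + 1)), HasDerivAt u (u' x) x :=
    fun j hj x hx => hderiv x (hsubI j hj hx)
  have hu'J : ∀ j, j ≤ N → IntervalIntegrable u' volume (τ j) (τ (j + 1)) :=
    fun j hj => hu'.mono_set (hsubU j hj)
  have hu'2J : ∀ j, j ≤ N → IntervalIntegrable (fun x => u' x ^ 2) volume (τ j) (τ (j + 1)) :=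
    fun j hj => hu'2.mono_set (hsubU j hj)
  set p : ℕ → ℝ := fun j => ∫ x in τ j..τ (j + 1), u' x ^ 2 with hp
  have hpnn : ∀ j, j ≤ N → 0 ≤ p j := fun j hj =>
    intervalIntegral.integral_nonneg (hτ j hj).le (fun x _ => sq_nonneg _)
  have hCmono : ∀ r : ℝ, 0 ≤ r → r ≤ hhat → ∀ j, j ≤ N →
      (r / Real.pi) ^ 2 * p j ≤ (hhat / Real.pi) ^ 2 * p j := by
    intro r hr0 hr j hj
    apply mul_le_mul_of_nonneg_right _ (hpnn j hj)
    apply pow_le_pow_left₀ (by positivity)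
    exact div_le_div_of_nonneg_right hr hπ.le
  -- the three piece estimates
  have hA : ∫ x in (τ 0)..(τ 1), u x ^ 2 ≤ (hhat / Real.pi) ^ 2 * p 0 := by
    have h0 := poincare_left (τ 0) (τ 1) (hτ 0 (by omega)) u u'
      (hderivJ 0 (by omega)) (hu'J 0 (by omega)) (hu'2J 0 (by omega))
      (by rw [ha]; exact hua)
    refine h0.trans (hCmono _ ?_ hhhat0 0 (by omega))
    have := hτ 0 (by omega); linarith
  have hC : ∫ x in (τ N)..(τ (N + 1)), u x ^ 2 ≤ (hhat / Real.pi) ^ 2 * p N := by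
    have h0 := poincare_right (τ N) (τ (N + 1)) (hτ N le_rfl) u u'
      (hderivJ N le_rfl) (hu'J N le_rfl) (hu'2J N le_rfl)
      (by rw [hb]; exact hub)
    refine h0.trans (hCmono _ ?_ hhhatN N le_rfl)
    have := hτ N le_rfl; linarith
  have hB : ∀ j ∈ Finset.Ico 1 N,
      (∫ x in τ j..τ (j + 1),
        (u x - (τ (j + 1) - τ j)⁻¹ * ∫ y in τ j..τ (j + 1), u y) ^ 2)
      ≤ (hhat / Real.pi) ^ 2 * p j := by
    intro j hj
    rw [Finset.mem_Ico] at hj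
    have hjN : j ≤ N := by omega
    have h0 := poincare_mean (τ j) (τ (j + 1)) (hτ j hjN) u u'
      (hderivJ j hjN) (hu'J j hjN) (hu'2J j hjN)
    refine h0.trans (hCmono _ ?_ (hhhatint j hj.1 hj.2) j hjN)
    have := hτ j hjN; linarith
  -- sum decomposition of the RHS
  have hadj : ∑ j ∈ Finset.range (N + 1), p j = ∫ x in a..b, u' x ^ 2 := by
    have h := intervalIntegral.sum_integral_adjacent_intervals
      (a := τ) (μ := volume) (f := fun x => u' x ^ 2) (n := N + 1)
      (fun k hk => hu'2J k (by omega))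
    rw [ha, hb] at h
    exact h
  have hsplit : ∑ j ∈ Finset.range (N + 1), p j
      = p 0 + (∑ j ∈ Finset.Ico 1 N, p j) + p N := by
    rw [Finset.sum_range_succ, Finset.range_eq_Ico,
      Finset.sum_eq_sum_Ico_succ_bot (by omega : 0 < N)]
  calc ((∫ x in (τ 0)..(τ 1), u x ^ 2) +
        (∑ j ∈ Finset.Ico 1 N,
          ∫ x in τ j..τ (j + 1),
            (u x - (τ (j + 1) - τ j)⁻¹ * ∫ y in τ j..τ (j + 1), u y) ^ 2) +
        ∫ x in (τ N)..(τ (N + 1)), u x ^ 2)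
      ≤ (hhat / Real.pi) ^ 2 * p 0 + (∑ j ∈ Finset.Ico 1 N, (hhat / Real.pi) ^ 2 * p j)
          + (hhat / Real.pi) ^ 2 * p N :=
        add_le_add (add_le_add hA (Finset.sum_le_sum hB)) hC
    _ = (hhat / Real.pi) ^ 2 * (p 0 + (∑ j ∈ Finset.Ico 1 N, p j) + p N) := by
        rw [mul_add, mul_add, Finset.mul_sum]
    _ = (hhat / Real.pi) ^ 2 * ∑ j ∈ Finset.range (N + 1), p j := by rw [hsplit]
    _ = (hhat / Real.pi) ^ 2 * ∫ x in a..b, u' x ^ 2 := by rw [hadj]
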